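/- Fix a positive integer N. Consider the set D_1 = {M ∈ M_N(ℂ) : M² = 0} of square-zero N×N complex matrices (ordinary matrix square). Then the vanishing ideal of D_1 in the polynomial ring ℂ[x_{ij} : 1 ≤ i, j ≤ N], namely I(D_1) = {p : p(M) = 0 for every M ∈ D_1 (where p(M) means evaluating the variables x_{ij} at the entries M_{ij})}, is a prime ideal. Equivalently, the affine variety of square-zero matrices is irreducible. -/

import Mathlib

open Module Submodule Matrix MvPolynomial

lemma exists_between_finrank {K V : Type*} [Field K] [AddCommGroup V] [Module K V]
    [FiniteDimensional K V] (p q : Submodule K V) (hpq : p ≤ q) (n : ℕ)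
    (h1 : finrank K p ≤ n) (h2 : n ≤ finrank K q) :
    ∃ W : Submodule K V, p ≤ W ∧ W ≤ q ∧ finrank K W = n := by
  induction n with
  | zero => exact ⟨p, le_rfl, hpq, Nat.le_antisymm h1 (Nat.zero_le _)⟩
  | succ n ih =>
    rcases Nat.lt_or_ge (finrank K p) (n+1) with h | h
    · obtain ⟨W, hpW, hWq, hW⟩ := ih (Nat.lt_succ_iff.mp h) (Nat.le_of_succ_le h2)
      have hnle : ¬ q ≤ W := fun hqW => by
        have := Submodule.finrank_mono hqW; omega
      obtain ⟨x, hxq, hxW⟩ := SetLike.not_le_iff_exists.mp hnle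
      have hx0 : x ≠ 0 := fun h => hxW (h ▸ W.zero_mem)
      have hdis : W ⊓ (K ∙ x) = ⊥ := by
        rw [eq_bot_iff]
        rintro y ⟨hyW, hy⟩
        obtain ⟨c, rfl⟩ := mem_span_singleton.mp hy
        rcases eq_or_ne c 0 with rfl | hc
        · simp
        · exact absurd (by simpa [smul_smul, inv_mul_cancel₀ hc] using W.smul_mem c⁻¹ hyW) hxW
      have hkey := Submodule.finrank_sup_add_finrank_inf_eq W (K ∙ x)
      rw [hdis, finrank_bot, finrank_span_singleton hx0] at hkey
      exact ⟨W ⊔ K ∙ x, le_trans hpW le_sup_left,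
        sup_le hWq (span_le.mpr (by simpa using hxq)), by omega⟩
    · exact ⟨p, le_rfl, hpq, Nat.le_antisymm h1 h⟩



section formula
variable {R S : Type*} [CommRing R] [CommRing S] {r n : ℕ}

lemma formula_sq (A : Matrix (Fin r) (Fin n) R) (D B : Matrix (Fin n) (Fin r) R) :
    ((((A*D).det • B - D * adjugate (A*D) * A * B) * A) *
     (((A*D).det • B - D * adjugate (A*D) * A * B) * A)) = 0 := by
  set E := (A*D).det • B - D * adjugate (A*D) * A * B with hE
  have hAE : A * E = 0 := by
    rw [hE]
    simp only [Matrix.mul_sub, Matrix.mul_smul, Matrix.smul_mul, ← Matrix.mul_assoc,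
      Matrix.mul_adjugate, Matrix.one_mul, sub_self]
  rw [Matrix.mul_assoc, ← Matrix.mul_assoc A E A, hAE, Matrix.zero_mul, Matrix.mul_zero]

lemma formula_map (φ : R →+* S) (A : Matrix (Fin r) (Fin n) R) (D B : Matrix (Fin n) (Fin r) R) :
    ((((A*D).det • B - D * adjugate (A*D) * A * B) * A).map φ) =
    ((((A.map φ)*(D.map φ)).det • (B.map φ) -
      (D.map φ) * adjugate ((A.map φ)*(D.map φ)) * (A.map φ) * (B.map φ)) * (A.map φ)) := by
  have hsmul : ∀ (c : R) (M : Matrix (Fin n) (Fin r) R), (c • M).map φ = φ c • (M.map φ) := by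
    intro c M; ext i j; simp [Matrix.map_apply, smul_eq_mul]
  have hadj := φ.map_adjugate (A*D)
  simp only [RingHom.mapMatrix_apply] at hadj
  rw [Matrix.map_mul, Matrix.map_sub _ (map_sub φ), hsmul, φ.map_det, Matrix.map_mul,
    Matrix.map_mul, Matrix.map_mul, hadj, Matrix.map_mul]
  simp [RingHom.mapMatrix_apply, Matrix.map_mul]

end formula


lemma squareZero_factor (N : ℕ) (M : Matrix (Fin N) (Fin N) ℂ) (hM : M * M = 0) :
    ∃ (A : Matrix (Fin (N/2)) (Fin N) ℂ) (D B : Matrix (Fin N) (Fin (N/2)) ℂ),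
      A * D = 1 ∧ A * B = 0 ∧ B * A = M := by
  set m : (Fin N → ℂ) →ₗ[ℂ] (Fin N → ℂ) := Matrix.toLin' M with hm
  have hmm : m ∘ₗ m = 0 := by
    rw [hm, ← Matrix.toLin'_mul, hM, map_zero]
  have hrange : LinearMap.range m ≤ LinearMap.ker m := by
    rintro _ ⟨x, rfl⟩
    simp [LinearMap.mem_ker, ← LinearMap.comp_apply, hmm]
  have hfr : finrank ℂ (Fin N → ℂ) = N := Module.finrank_fin_fun ℂ
  have hrn : finrank ℂ (LinearMap.range m) + finrank ℂ (LinearMap.ker m) = N := by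
    have := LinearMap.finrank_range_add_finrank_ker m
    rwa [hfr] at this
  have hs : finrank ℂ (LinearMap.range m) ≤ finrank ℂ (LinearMap.ker m) :=
    Submodule.finrank_mono hrange
  obtain ⟨V, hrV, hVk, hV⟩ := exists_between_finrank (LinearMap.range m) (LinearMap.ker m)
    hrange (N - N/2) (by omega) (by omega)
  -- quotient and equivalence
  have hq : finrank ℂ ((Fin N → ℂ) ⧸ V) = N / 2 := by
    have := V.finrank_quotient_add_finrank
    rw [hfr, hV] at this
    omega
  have e : ((Fin N → ℂ) ⧸ V) ≃ₗ[ℂ] (Fin (N/2) → ℂ) :=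
    LinearEquiv.ofFinrankEq _ _ (by rw [hq, Module.finrank_fin_fun])
  set α : (Fin N → ℂ) →ₗ[ℂ] (Fin (N/2) → ℂ) := (e : _ →ₗ[ℂ] _) ∘ₗ V.mkQ with hα
  have hkerα : LinearMap.ker α = V := by
    rw [hα, LinearMap.ker_comp, LinearEquiv.ker, Submodule.comap_bot, Submodule.ker_mkQ]
  have hsurj : LinearMap.range α = ⊤ := by
    rw [hα, LinearMap.range_comp, Submodule.range_mkQ, Submodule.map_top, LinearEquiv.range]
  obtain ⟨δ, hδ⟩ := α.exists_rightInverse_of_surjective hsurj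
  refine ⟨LinearMap.toMatrix' α, LinearMap.toMatrix' δ, M * LinearMap.toMatrix' δ, ?_, ?_, ?_⟩
  · rw [← LinearMap.toMatrix'_comp, hδ, LinearMap.toMatrix'_id]
  · have hαm : α ∘ₗ m = 0 := by
      refine LinearMap.ext fun x => ?_
      simp only [LinearMap.comp_apply, LinearMap.zero_apply]
      have hmx : m x ∈ V := hrV (LinearMap.mem_range_self m x)
      rw [← hkerα] at hmx
      exact hmx
    calc LinearMap.toMatrix' α * (M * LinearMap.toMatrix' δ)
        = (LinearMap.toMatrix' α * M) * LinearMap.toMatrix' δ := by rw [Matrix.mul_assoc]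
      _ = 0 := by
          rw [show M = LinearMap.toMatrix' m from (LinearMap.toMatrix'_toLin' M).symm,
            ← LinearMap.toMatrix'_comp, hαm, map_zero, Matrix.zero_mul]
  · have hmda : m ∘ₗ (δ ∘ₗ α) = m := by
      refine LinearMap.ext fun x => ?_
      simp only [LinearMap.comp_apply]
      have hmem : δ (α x) - x ∈ LinearMap.ker m := by
        apply hVk
        rw [← hkerα]
        simp only [LinearMap.mem_ker, map_sub]
        have := LinearMap.congr_fun hδ (α x)
        simp only [LinearMap.comp_apply, LinearMap.id_apply] at this
        rw [this, sub_self]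
      have h0 := LinearMap.mem_ker.mp hmem
      rwa [map_sub, sub_eq_zero] at h0
    calc M * LinearMap.toMatrix' δ * LinearMap.toMatrix' α
        = LinearMap.toMatrix' (m ∘ₗ (δ ∘ₗ α)) := by
          rw [LinearMap.toMatrix'_comp, LinearMap.toMatrix'_comp,
            show LinearMap.toMatrix' m = M from LinearMap.toMatrix'_toLin' M, Matrix.mul_assoc]
      _ = M := by rw [hmda, show LinearMap.toMatrix' m = M from LinearMap.toMatrix'_toLin' M]

private def pIdx (N : ℕ) : Type :=
  (Fin (N/2) × Fin N) ⊕ ((Fin N × Fin (N/2)) ⊕ (Fin N × Fin (N/2)))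

private noncomputable def polyA (N : ℕ) : Matrix (Fin (N/2)) (Fin N) (MvPolynomial (pIdx N) ℂ) :=
  Matrix.of fun i j => X (Sum.inl (i, j))

private noncomputable def polyD (N : ℕ) : Matrix (Fin N) (Fin (N/2)) (MvPolynomial (pIdx N) ℂ) :=
  Matrix.of fun i j => X (Sum.inr (Sum.inl (i, j)))

private noncomputable def polyB (N : ℕ) : Matrix (Fin N) (Fin (N/2)) (MvPolynomial (pIdx N) ℂ) :=
  Matrix.of fun i j => X (Sum.inr (Sum.inr (i, j)))

private noncomputable def polyM (N : ℕ) : Matrix (Fin N) (Fin N) (MvPolynomial (pIdx N) ℂ) :=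
  ((polyA N * polyD N).det • polyB N -
    polyD N * adjugate (polyA N * polyD N) * polyA N * polyB N) * polyA N

private noncomputable def Φmap (N : ℕ) :
    MvPolynomial (Fin N × Fin N) ℂ →ₐ[ℂ] MvPolynomial (pIdx N) ℂ :=
  bind₁ (fun ij => polyM N ij.1 ij.2)

/-- evaluating the polynomial matrix at a point gives the formula on real matrices -/
private lemma polyM_map (N : ℕ) (x : pIdx N → ℂ) :
    (polyM N).map (eval x) =
      (((Matrix.of fun i j => x (Sum.inl (i, j))) * (Matrix.of fun i j => x (Sum.inr (Sum.inl (i, j))))).det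
          • (Matrix.of fun i j => x (Sum.inr (Sum.inr (i, j))))
        - (Matrix.of fun i j => x (Sum.inr (Sum.inl (i, j))))
          * adjugate ((Matrix.of fun i j => x (Sum.inl (i, j))) * (Matrix.of fun i j => x (Sum.inr (Sum.inl (i, j)))))
          * (Matrix.of fun i j => x (Sum.inl (i, j)))
          * (Matrix.of fun i j => x (Sum.inr (Sum.inr (i, j)))))
      * (Matrix.of fun i j => x (Sum.inl (i, j))) := by
  have hA : (polyA N).map (eval x) = (Matrix.of fun i j => x (Sum.inl (i, j))) := by
    ext i j; simp [polyA, Matrix.map_apply]; exact MvPolynomial.eval_X _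
  have hD : (polyD N).map (eval x) = (Matrix.of fun i j => x (Sum.inr (Sum.inl (i, j)))) := by
    ext i j; simp [polyD, Matrix.map_apply]; exact MvPolynomial.eval_X _
  have hB : (polyB N).map (eval x) = (Matrix.of fun i j => x (Sum.inr (Sum.inr (i, j)))) := by
    ext i j; simp [polyB, Matrix.map_apply]; exact MvPolynomial.eval_X _
  rw [polyM, formula_map (eval x), hA, hD, hB]

private lemma eval_Φmap (N : ℕ) (x : pIdx N → ℂ) (p : MvPolynomial (Fin N × Fin N) ℂ) :
    eval x (Φmap N p) = eval (fun ij => eval x (polyM N ij.1 ij.2)) p := by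
  have h := eval₂Hom_bind₁ (RingHom.id ℂ) x (fun ij => polyM N ij.1 ij.2) p
  unfold Φmap
  exact h

/-- The affine variety `D₁ = {M ∈ M_N(ℂ) : M² = 0}` of square-zero matrices is
irreducible: the vanishing ideal of `D₁` in the polynomial ring
`ℂ[x_{ij} : 1 ≤ i,j ≤ N]` (polynomials vanishing at every square-zero matrix, the
variables being evaluated at the matrix entries) is a prime ideal. -/
theorem squareZero_vanishingIdeal_isPrime (N : ℕ) (hN : 0 < N) :
    (MvPolynomial.vanishingIdeal ℂ
      {f : Fin N × Fin N → ℂ |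
        (Matrix.of fun i j => f (i, j)) * (Matrix.of fun i j => f (i, j)) = 0}).IsPrime := by
  have hkey : MvPolynomial.vanishingIdeal ℂ
      {f : Fin N × Fin N → ℂ |
        (Matrix.of fun i j => f (i, j)) * (Matrix.of fun i j => f (i, j)) = 0}
      = RingHom.ker (Φmap N) := by
    ext p
    rw [mem_vanishingIdeal_iff, RingHom.mem_ker]
    constructor
    · intro hp
      refine MvPolynomial.funext (q := 0) fun x => ?_
      rw [map_zero, eval_Φmap]
      apply hp
      show (Matrix.of fun i j => eval x (polyM N ((i, j) : Fin N × Fin N).1 (i, j).2)) *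
        (Matrix.of fun i j => eval x (polyM N ((i, j) : Fin N × Fin N).1 (i, j).2)) = 0
      have hof : (Matrix.of fun i j => eval x (polyM N ((i, j) : Fin N × Fin N).1 (i, j).2)) =
          (polyM N).map (eval x) := rfl
      rw [hof, polyM_map]
      exact formula_sq _ _ _
    · intro hp f hf
      obtain ⟨A, D, B, hAD, hAB, hBA⟩ :=
        squareZero_factor N (Matrix.of fun i j => f (i, j)) hf
      set x : pIdx N → ℂ :=
        Sum.elim (fun q => A q.1 q.2) (Sum.elim (fun q => D q.1 q.2) (fun q => B q.1 q.2)) with hx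
      have hfx : (fun ij : Fin N × Fin N => eval x (polyM N ij.1 ij.2)) = f := by
        funext ij
        have h1 : eval x (polyM N ij.1 ij.2) = ((polyM N).map (eval x)) ij.1 ij.2 := rfl
        have hA : (Matrix.of fun i j => x (Sum.inl (i, j))) = A := rfl
        have hD : (Matrix.of fun i j => x (Sum.inr (Sum.inl (i, j)))) = D := rfl
        have hB : (Matrix.of fun i j => x (Sum.inr (Sum.inr (i, j)))) = B := rfl
        rw [h1, polyM_map, hA, hD, hB, hAD, det_one, one_smul, adjugate_one, Matrix.mul_one,
          Matrix.mul_assoc, hAB, Matrix.mul_zero, sub_zero, hBA]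
        show f (ij.1, ij.2) = f ij
        rw [Prod.mk.eta]
      have := eval_Φmap N x p
      rw [hfx, hp, map_zero] at this
      exact this.symm
  rw [hkey]
  exact RingHom.ker_isPrime _
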